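/- Let $X_1,\ldots,X_n$ be indicator (i.e. $\{0,1\}$-valued) random variables on a probability space, let $0 < \beta < 1$ and let $k$ be a natural number with $0 < k \le \beta n$. Then $\Pr\left(\sum_{i=1}^n X_i \ge \beta n\right) \le \binom{\lceil\beta n\rceil}{k}^{-1} \sum_{S \subseteq \{1,\ldots,n\}, |S|=k} \Pr\left(\forall i \in S,\ X_i = 1\right)$. -/

import Mathlib

open MeasureTheory ProbabilityTheory Finset
open scoped ENNReal

theorem stmt_0 {Ω : Type*} [MeasureSpace Ω] [IsProbabilityMeasure (ℙ : Measure Ω)]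
    (n : ℕ) (X : Fin n → Ω → ℝ) (hX : ∀ i, Measurable (X i))
    (h01 : ∀ i ω, X i ω = 0 ∨ X i ω = 1)
    (β : ℝ) (hβ0 : 0 < β) (hβ1 : β < 1)
    (k : ℕ) (hk0 : 0 < k) (hk : (k : ℝ) ≤ β * n) :
    ℙ {ω | β * n ≤ ∑ i, X i ω} ≤
      ((Nat.choose ⌈β * n⌉₊ k : ℝ≥0∞))⁻¹ *
        ∑ S ∈ Finset.powersetCard k (Finset.univ : Finset (Fin n)),
          ℙ {ω | ∀ i ∈ S, X i ω = 1} := by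
  classical
  set m := ⌈β * n⌉₊ with hm
  set P := Finset.powersetCard k (Finset.univ : Finset (Fin n)) with hP
  set A : Set Ω := {ω | β * n ≤ ∑ i, X i ω} with hA
  set E : Finset (Fin n) → Set Ω := fun S => {ω | ∀ i ∈ S, X i ω = 1} with hE
  have hAmeas : MeasurableSet A := by
    apply measurableSet_le measurable_const
    exact Finset.measurable_sum _ (fun i _ => hX i)
  have hEmeas : ∀ S : Finset (Fin n), MeasurableSet (E S) := by
    intro S
    have : E S = ⋂ i ∈ S, (X i) ⁻¹' {1} := by
      ext ω; simp [hE, Set.mem_iInter]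
    rw [this]
    exact MeasurableSet.biInter S.countable_toSet
      (fun i _ => (hX i) (measurableSet_singleton 1))
  have hkm : k ≤ m := by
    have h1 : (k : ℝ) ≤ (m : ℝ) := le_trans hk (Nat.le_ceil _)
    exact_mod_cast h1
  have hc0 : ((m.choose k : ℝ≥0∞)) ≠ 0 := by
    simp [Nat.choose_eq_zero_iff, not_lt.mpr hkm]
  have hcT : ((m.choose k : ℝ≥0∞)) ≠ ⊤ := by simp
  have key : ∀ ω, A.indicator (fun _ => (m.choose k : ℝ≥0∞)) ω ≤
      ∑ S ∈ P, (E S).indicator 1 ω := by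
    intro ω
    by_cases hω : ω ∈ A
    · rw [Set.indicator_of_mem hω]
      set T : Finset (Fin n) := Finset.univ.filter (fun i => X i ω = 1) with hT
      have hsum : ∑ i, X i ω = T.card := by
        rw [hT, Finset.card_filter]
        push_cast
        apply Finset.sum_congr rfl
        intro i _
        rcases h01 i ω with h | h <;> simp [h]
      have hmT : m ≤ T.card := by
        apply Nat.ceil_le.mpr
        rw [← hsum]; exact hω
      calc (m.choose k : ℝ≥0∞) ≤ (T.card.choose k : ℝ≥0∞) := by
            exact_mod_cast Nat.choose_le_choose k hmT
        _ = ∑ S ∈ Finset.powersetCard k T, (E S).indicator 1 ω := by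
            rw [Finset.sum_congr rfl (fun S hS => ?_), Finset.sum_const,
              Finset.card_powersetCard, nsmul_eq_mul, mul_one]
            have hST : S ⊆ T := (Finset.mem_powersetCard.mp hS).1
            have : ω ∈ E S := by
              intro i hi
              have := hST hi
              rw [hT, Finset.mem_filter] at this
              exact this.2
            simp [Set.indicator_of_mem this]
        _ ≤ ∑ S ∈ P, (E S).indicator 1 ω := by
            apply Finset.sum_le_sum_of_subset
            intro S hS
            rw [Finset.mem_powersetCard] at hS
            rw [hP, Finset.mem_powersetCard]
            exact ⟨Finset.subset_univ S, hS.2⟩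
    · rw [Set.indicator_of_notMem hω]; exact zero_le
  have main : (m.choose k : ℝ≥0∞) * ℙ A ≤ ∑ S ∈ P, ℙ (E S) := by
    calc (m.choose k : ℝ≥0∞) * ℙ A
        = ∫⁻ ω, A.indicator (fun _ => (m.choose k : ℝ≥0∞)) ω ∂ℙ := by
          rw [lintegral_indicator_const hAmeas]
      _ ≤ ∫⁻ ω, ∑ S ∈ P, (E S).indicator 1 ω ∂ℙ := lintegral_mono key
      _ = ∑ S ∈ P, ∫⁻ ω, (E S).indicator 1 ω ∂ℙ := by
          apply lintegral_finset_sum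
          exact fun S _ => measurable_one.indicator (hEmeas S)
      _ = ∑ S ∈ P, ℙ (E S) := by
          exact Finset.sum_congr rfl (fun S _ => lintegral_indicator_one (hEmeas S))
  calc ℙ A = (m.choose k : ℝ≥0∞)⁻¹ * ((m.choose k : ℝ≥0∞) * ℙ A) := by
        rw [← mul_assoc, ENNReal.inv_mul_cancel hc0 hcT, one_mul]
    _ ≤ (m.choose k : ℝ≥0∞)⁻¹ * ∑ S ∈ P, ℙ (E S) := by
        exact mul_le_mul_right main _
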